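/- Let n ≥ 3 and let k₁, k₂, k₃ ≥ 1 be integers with k₁ + k₂ + k₃ = n. Then the Zelevinsky embeddings are associative: for all a ∈ Ĥ_{k₁}, b ∈ Ĥ_{k₂} and c ∈ Ĥ_{k₃}, ψ_{k₁+k₂,k₃}( ψ_{k₁,k₂}(a ⊗ b) ⊗ c ) = ψ_{k₁,k₂+k₃}( a ⊗ ψ_{k₂,k₃}(b ⊗ c) ) in Ĥ_n; equivalently, ψ_{k₁+k₂,k₃} ∘ (ψ_{k₁,k₂} ⊗ id) = ψ_{k₁,k₂+k₃} ∘ (id ⊗ ψ_{k₂,k₃}) as R-algebra homomorphisms Ĥ_{k₁} ⊗_R Ĥ_{k₂} ⊗_R Ĥ_{k₃} → Ĥ_n. -/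

import Mathlib

/-!
Statement 6: existence and uniqueness of the parabolic embeddings `ψ_L` and `ψ_R`
for extended affine Hecke algebras.
-/

noncomputable section

namespace ParabolicInduction

/-- The ground ring `R = ℤ[q, q⁻¹]`. -/
abbrev R : Type := LaurentPolynomial ℤ

/-- The element `q ∈ R`. -/
def qR : R := LaurentPolynomial.T 1

/-- The element `q⁻¹ ∈ R`. -/
def qRinv : R := LaurentPolynomial.T (-1)

/-- Generators of the extended affine Hecke algebra `Ĥ_n`:  the `T_i` (present only
when `2 ≤ n`) and `ρ`, `ρ⁻¹`.  For `n = 1` only `ρ^{±1}` remain, so that `Ĥ_1` is the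
Laurent polynomial algebra `R[ρ, ρ⁻¹]`. -/
inductive HGen (n : ℕ) : Type
  | T (i : Fin n) (h : 2 ≤ n) : HGen n
  | rho : HGen n
  | rhoInv : HGen n

/-- Cyclic successor `i ↦ i + 1 (mod n)` on `Fin n`. -/
def cyc {n : ℕ} (i : Fin n) : Fin n := ⟨((i : ℕ) + 1) % n, Nat.mod_lt _ i.pos⟩

/-- The defining relations of the extended affine Hecke algebra `Ĥ_n`. -/
inductive HRel (n : ℕ) : FreeAlgebra R (HGen n) → FreeAlgebra R (HGen n) → Prop
  | quad (i : Fin n) (h : 2 ≤ n) :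
      HRel n ((FreeAlgebra.ι R (HGen.T i h) + algebraMap R _ qR) *
        (FreeAlgebra.ι R (HGen.T i h) - algebraMap R _ qRinv)) 0
  | comm (i j : Fin n) (h : 2 < n)
      (h1 : ((i : ℕ) : ZMod n) - ((j : ℕ) : ZMod n) ≠ 1)
      (h2 : ((i : ℕ) : ZMod n) - ((j : ℕ) : ZMod n) ≠ -1) :
      HRel n (FreeAlgebra.ι R (HGen.T i h.le) * FreeAlgebra.ι R (HGen.T j h.le))
        (FreeAlgebra.ι R (HGen.T j h.le) * FreeAlgebra.ι R (HGen.T i h.le))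
  | braid (i : Fin n) (h : 2 < n) :
      HRel n
        (FreeAlgebra.ι R (HGen.T i h.le) * FreeAlgebra.ι R (HGen.T (cyc i) h.le) *
          FreeAlgebra.ι R (HGen.T i h.le))
        (FreeAlgebra.ι R (HGen.T (cyc i) h.le) * FreeAlgebra.ι R (HGen.T i h.le) *
          FreeAlgebra.ι R (HGen.T (cyc i) h.le))
  | rho_rhoInv : HRel n (FreeAlgebra.ι R HGen.rho * FreeAlgebra.ι R HGen.rhoInv) 1
  | rhoInv_rho : HRel n (FreeAlgebra.ι R HGen.rhoInv * FreeAlgebra.ι R HGen.rho) 1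
  | conj (i : Fin n) (h : 2 ≤ n) :
      HRel n
        (FreeAlgebra.ι R HGen.rho * FreeAlgebra.ι R (HGen.T i h) * FreeAlgebra.ι R HGen.rhoInv)
        (FreeAlgebra.ι R (HGen.T (cyc i) h))

/-- The extended affine Hecke algebra `Ĥ_n`, presented by generators and relations. -/
abbrev Hecke (n : ℕ) : Type := RingQuot (HRel n)

/-- The generator `T_i` of `Ĥ_n` (indices read modulo `n`). -/
def HT {n : ℕ} (h : 2 ≤ n) (i : ℕ) : Hecke n :=
  RingQuot.mkAlgHom R (HRel n)
    (FreeAlgebra.ι R (HGen.T ⟨i % n, Nat.mod_lt _ (by omega)⟩ h))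

/-- The generator `ρ` of `Ĥ_n`. -/
def Hrho (n : ℕ) : Hecke n := RingQuot.mkAlgHom R (HRel n) (FreeAlgebra.ι R HGen.rho)

/-- The generator `ρ⁻¹` of `Ĥ_n`. -/
def HrhoInv (n : ℕ) : Hecke n := RingQuot.mkAlgHom R (HRel n) (FreeAlgebra.ι R HGen.rhoInv)

/-- The element `T_i⁻¹ = T_i + q - q⁻¹` of `Ĥ_n`. -/
def HTinv {n : ℕ} (h : 2 ≤ n) (i : ℕ) : Hecke n :=
  HT h i + algebraMap R (Hecke n) (qR - qRinv)

/-- The descending ordered product `T_a T_{a-1} ⋯ T_b` (empty, i.e. `1`, if `b > a`). -/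
def Tdesc {n : ℕ} (h : 2 ≤ n) (a b : ℕ) : Hecke n :=
  (((List.range' b (a + 1 - b)).reverse).map (HT h)).prod

/-- The ascending ordered product `T_a T_{a+1} ⋯ T_b` (empty, i.e. `1`, if `b < a`). -/
def Tasc {n : ℕ} (h : 2 ≤ n) (a b : ℕ) : Hecke n :=
  ((List.range' a (b + 1 - a)).map (HT h)).prod

/-- The descending ordered product `T_a⁻¹ T_{a-1}⁻¹ ⋯ T_b⁻¹` (empty if `b > a`). -/
def TinvDesc {n : ℕ} (h : 2 ≤ n) (a b : ℕ) : Hecke n :=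
  (((List.range' b (a + 1 - b)).reverse).map (HTinv h)).prod

/-- The ascending ordered product `T_a⁻¹ T_{a+1}⁻¹ ⋯ T_b⁻¹` (empty if `b < a`). -/
def TinvAsc {n : ℕ} (h : 2 ≤ n) (a b : ℕ) : Hecke n :=
  ((List.range' a (b + 1 - a)).map (HTinv h)).prod

/-- The defining conditions for the left parabolic embedding `ψ_L : Ĥ_k → Ĥ_n`:
`ψ_L(T_i) = T_i` for `1 ≤ i ≤ k - 1`,
`ψ_L(T_0) = T_k⁻¹ ⋯ T_{n-1}⁻¹ T_0 T_{n-1} ⋯ T_k` (when `2 ≤ k`), and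
`ψ_L(ρ) = ρ T_{n-1} ⋯ T_k`. -/
def IsPsiL (n k : ℕ) (hn : 2 ≤ n) (f : Hecke k →ₐ[R] Hecke n) : Prop :=
  (∀ (hk : 2 ≤ k) (i : ℕ), 1 ≤ i → i ≤ k - 1 → f (HT hk i) = HT hn i) ∧
  (∀ hk : 2 ≤ k, f (HT hk 0) = TinvAsc hn k (n - 1) * HT hn 0 * Tdesc hn (n - 1) k) ∧
  f (Hrho k) = Hrho n * Tdesc hn (n - 1) k

/-- The defining conditions for the right parabolic embedding `ψ_R : Ĥ_m → Ĥ_n`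
(where `m = n - k`):
`ψ_R(T_j) = T_{k+j}` for `1 ≤ j ≤ m - 1`,
`ψ_R(T_0) = T_0 T_1 ⋯ T_{k-1} T_k T_{k-1}⁻¹ ⋯ T_1⁻¹ T_0⁻¹` (when `2 ≤ m`), and
`ψ_R(ρ) = T_k⁻¹ T_{k-1}⁻¹ ⋯ T_1⁻¹ ρ`. -/
def IsPsiR (n k m : ℕ) (hn : 2 ≤ n) (g : Hecke m →ₐ[R] Hecke n) : Prop :=
  (∀ (hm : 2 ≤ m) (j : ℕ), 1 ≤ j → j ≤ m - 1 → g (HT hm j) = HT hn (k + j)) ∧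
  (∀ hm : 2 ≤ m, g (HT hm 0) = Tasc hn 0 (k - 1) * HT hn k * TinvDesc hn (k - 1) 0) ∧
  g (Hrho m) = TinvDesc hn k 1 * Hrho n
variable {n k : ℕ}

private lemma ring_helper1 {A : Type} [Ring A] (t a b : A) (hc : a * t = t * a) :
    t * (t + (a - b)) = (t + a) * (t - b) + a * b := by
  simp only [mul_add, add_mul, mul_sub, sub_mul]
  rw [hc]; abel

private lemma ring_helper2 {A : Type} [Ring A] (t a b : A) (hc : a * t = t * a)
    (hc' : b * t = t * b) : (t + (a - b)) * t = (t + a) * (t - b) + a * b := by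
  simp only [mul_add, add_mul, mul_sub, sub_mul]
  rw [hc, hc']; abel

lemma qR_mul_qRinv : qR * qRinv = 1 := by
  rw [qR, qRinv, ← LaurentPolynomial.T_add]
  norm_num

lemma HT_quad (h : 2 ≤ n) (i : ℕ) :
    (HT h i + algebraMap R (Hecke n) qR) * (HT h i - algebraMap R (Hecke n) qRinv) = 0 := by
  have h0 := RingQuot.mkAlgHom_rel R (HRel.quad ⟨i % n, Nat.mod_lt _ (by omega)⟩ h)
  rw [map_mul, map_add, map_sub, AlgHom.commutes, AlgHom.commutes, map_zero] at h0
  exact h0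

lemma HT_mul_HTinv (h : 2 ≤ n) (i : ℕ) : HT h i * HTinv h i = 1 := by
  have hab : algebraMap R (Hecke n) qR * algebraMap R (Hecke n) qRinv = 1 := by
    rw [← map_mul, qR_mul_qRinv, map_one]
  have hc : algebraMap R (Hecke n) qR * HT h i = HT h i * algebraMap R (Hecke n) qR :=
    Algebra.commutes _ _
  rw [HTinv, map_sub, ring_helper1 _ _ _ hc, HT_quad, zero_add, hab]

lemma HTinv_mul_HT (h : 2 ≤ n) (i : ℕ) : HTinv h i * HT h i = 1 := by
  have hab : algebraMap R (Hecke n) qR * algebraMap R (Hecke n) qRinv = 1 := by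
    rw [← map_mul, qR_mul_qRinv, map_one]
  have hc : algebraMap R (Hecke n) qR * HT h i = HT h i * algebraMap R (Hecke n) qR :=
    Algebra.commutes _ _
  have hc' : algebraMap R (Hecke n) qRinv * HT h i = HT h i * algebraMap R (Hecke n) qRinv :=
    Algebra.commutes _ _
  rw [HTinv, map_sub, ring_helper2 _ _ _ hc hc', HT_quad, zero_add, hab]

lemma zmod_sub_ne {i j d : ℕ} (hn0 : 0 < n) (hi : i < n) (hj : j < n) (hd : d < n)
    (hne1 : j + d ≠ i) (hne2 : j + d ≠ i + n) :
    ((i : ZMod n) - (j : ZMod n)) ≠ ((d : ℕ) : ZMod n) := by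
  intro hc
  have hcast : ((i : ℕ) : ZMod n) = ((j + d : ℕ) : ZMod n) := by
    push_cast
    linear_combination hc
  have hmod := (ZMod.natCast_eq_natCast_iff' _ _ _).mp hcast
  rw [Nat.mod_eq_of_lt hi] at hmod
  rcases Nat.lt_or_ge (j + d) n with hlt | hge
  · rw [Nat.mod_eq_of_lt hlt] at hmod; omega
  · rcases Nat.lt_or_ge (j + d) (2 * n) with hlt2 | hge2
    · have : (j + d) % n = j + d - n := by
        rw [Nat.mod_eq_sub_mod hge, Nat.mod_eq_of_lt (by omega)]
      omega
    · omega

lemma commute_HT (h : 2 < n) {i j : ℕ} (hi : i < n) (hj : j < n)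
    (hij : i + 2 ≤ j) (hji : j + 2 ≤ i + n) : Commute (HT h.le i) (HT h.le j) := by
  have c1 : (((i % n : ℕ) : ZMod n)) - ((j % n : ℕ) : ZMod n) ≠ 1 := by
    rw [ZMod.natCast_mod, ZMod.natCast_mod]
    have := zmod_sub_ne (n := n) (i := i) (j := j) (d := 1) (by omega) hi hj (by omega)
      (by omega) (by omega)
    simpa using this
  have c2 : (((i % n : ℕ) : ZMod n)) - ((j % n : ℕ) : ZMod n) ≠ -1 := by
    rw [ZMod.natCast_mod, ZMod.natCast_mod]
    have := zmod_sub_ne (n := n) (i := i) (j := j) (d := n - 1) (by omega) hi hj (by omega)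
      (by omega) (by omega)
    have hrw : (((n - 1 : ℕ)) : ZMod n) = -1 := by
      have : ((n : ℕ) : ZMod n) = 0 := ZMod.natCast_self n
      push_cast [Nat.cast_sub (by omega : 1 ≤ n)]
      rw [this]; ring
    rwa [hrw] at this
  have hr := RingQuot.mkAlgHom_rel R
    (HRel.comm ⟨i % n, Nat.mod_lt _ (by omega)⟩ ⟨j % n, Nat.mod_lt _ (by omega)⟩ h c1 c2)
  rw [map_mul, map_mul] at hr
  exact hr

lemma commute_HTinv_right {x : Hecke n} (h : 2 ≤ n) {i : ℕ} (hc : Commute x (HT h i)) :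
    Commute x (HTinv h i) := by
  rw [HTinv]
  exact hc.add_right (Algebra.commutes _ _).symm

lemma prod_mul_invprod (h : 2 ≤ n) (l : List ℕ) :
    (l.map (HT h)).prod * ((l.reverse).map (HTinv h)).prod = 1 := by
  induction l with
  | nil => simp
  | cons a l ih =>
    rw [List.map_cons, List.prod_cons, List.reverse_cons, List.map_append, List.prod_append,
      List.map_cons, List.map_nil, List.prod_cons, List.prod_nil, mul_one,
      mul_assoc, ← mul_assoc ((l.map (HT h)).prod), ih, one_mul, HT_mul_HTinv]

lemma invprod_mul_prod (h : 2 ≤ n) (l : List ℕ) :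
    ((l.reverse).map (HTinv h)).prod * (l.map (HT h)).prod = 1 := by
  induction l with
  | nil => simp
  | cons a l ih =>
    rw [List.map_cons, List.prod_cons, List.reverse_cons, List.map_append, List.prod_append,
      List.map_cons, List.map_nil, List.prod_cons, List.prod_nil, mul_one,
      mul_assoc, ← mul_assoc (HTinv h a), HTinv_mul_HT, one_mul, ih]

lemma Tasc_mul_TinvDesc (h : 2 ≤ n) (a b : ℕ) : Tasc h a b * TinvDesc h b a = 1 :=
  prod_mul_invprod h (List.range' a (b + 1 - a))

lemma TinvDesc_mul_Tasc (h : 2 ≤ n) (a b : ℕ) : TinvDesc h b a * Tasc h a b = 1 :=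
  invprod_mul_prod h (List.range' a (b + 1 - a))

lemma Tdesc_mul_TinvAsc (h : 2 ≤ n) (a b : ℕ) : Tdesc h a b * TinvAsc h b a = 1 := by
  have := prod_mul_invprod h ((List.range' b (a + 1 - b)).reverse)
  rwa [List.reverse_reverse] at this

lemma TinvAsc_mul_Tdesc (h : 2 ≤ n) (a b : ℕ) : TinvAsc h b a * Tdesc h a b = 1 := by
  have := invprod_mul_prod h ((List.range' b (a + 1 - b)).reverse)
  rwa [List.reverse_reverse] at this

lemma commute_Tdesc {x : Hecke n} (h : 2 ≤ n) {a b : ℕ}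
    (hc : ∀ j, b ≤ j → j ≤ a → Commute x (HT h j)) : Commute x (Tdesc h a b) := by
  apply Commute.list_prod_right
  intro y hy
  simp only [List.mem_map, List.mem_reverse, List.mem_range'_1] at hy
  obtain ⟨j, ⟨hj1, hj2⟩, rfl⟩ := hy
  exact hc j hj1 (by omega)

lemma commute_Tasc {x : Hecke n} (h : 2 ≤ n) {a b : ℕ}
    (hc : ∀ j, a ≤ j → j ≤ b → Commute x (HT h j)) : Commute x (Tasc h a b) := by
  apply Commute.list_prod_right
  intro y hy
  simp only [List.mem_map, List.mem_range'_1] at hy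
  obtain ⟨j, ⟨hj1, hj2⟩, rfl⟩ := hy
  exact hc j hj1 (by omega)

lemma commute_TinvDesc {x : Hecke n} (h : 2 ≤ n) {a b : ℕ}
    (hc : ∀ j, b ≤ j → j ≤ a → Commute x (HT h j)) : Commute x (TinvDesc h a b) := by
  apply Commute.list_prod_right
  intro y hy
  simp only [List.mem_map, List.mem_reverse, List.mem_range'_1] at hy
  obtain ⟨j, ⟨hj1, hj2⟩, rfl⟩ := hy
  exact commute_HTinv_right h (hc j hj1 (by omega))

lemma commute_TinvAsc {x : Hecke n} (h : 2 ≤ n) {a b : ℕ}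
    (hc : ∀ j, a ≤ j → j ≤ b → Commute x (HT h j)) : Commute x (TinvAsc h a b) := by
  apply Commute.list_prod_right
  intro y hy
  simp only [List.mem_map, List.mem_range'_1] at hy
  obtain ⟨j, ⟨hj1, hj2⟩, rfl⟩ := hy
  exact commute_HTinv_right h (hc j hj1 (by omega))

lemma range'_split {a b c : ℕ} (hb : b ≤ c) (hc2 : c ≤ a + 1) :
    List.range' b (c - b) ++ List.range' c (a + 1 - c) = List.range' b (a + 1 - b) := by
  have h0 : List.range' b (c - b) ++ List.range' (b + 1 * (c - b)) (a + 1 - c) 1 =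
      List.range' b ((c - b) + (a + 1 - c)) 1 := List.range'_append
  simp only [one_mul] at h0
  rw [show b + (c - b) = c from by omega] at h0
  rw [h0]
  congr 1
  omega

lemma Tdesc_split (h : 2 ≤ n) {a b c : ℕ} (hb : b ≤ c) (hc1 : 1 ≤ c) (hc2 : c ≤ a + 1) :
    Tdesc h a b = Tdesc h a c * Tdesc h (c - 1) b := by
  rw [Tdesc, Tdesc, Tdesc, show (c - 1) + 1 - b = c - b from by omega, ← range'_split hb hc2,
    List.reverse_append, List.map_append, List.prod_append]

lemma TinvDesc_split (h : 2 ≤ n) {a b c : ℕ} (hb : b ≤ c) (hc1 : 1 ≤ c) (hc2 : c ≤ a + 1) :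
    TinvDesc h a b = TinvDesc h a c * TinvDesc h (c - 1) b := by
  rw [TinvDesc, TinvDesc, TinvDesc, show (c - 1) + 1 - b = c - b from by omega,
    ← range'_split hb hc2, List.reverse_append, List.map_append, List.prod_append]

lemma Tasc_split (h : 2 ≤ n) {a b c : ℕ} (ha : a ≤ c) (hc1 : 1 ≤ c) (hc2 : c ≤ b + 1) :
    Tasc h a b = Tasc h a (c - 1) * Tasc h c b := by
  rw [Tasc, Tasc, Tasc, show (c - 1) + 1 - a = c - a from by omega, ← range'_split ha hc2,
    List.map_append, List.prod_append]

lemma TinvAsc_split (h : 2 ≤ n) {a b c : ℕ} (ha : a ≤ c) (hc1 : 1 ≤ c) (hc2 : c ≤ b + 1) :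
    TinvAsc h a b = TinvAsc h a (c - 1) * TinvAsc h c b := by
  rw [TinvAsc, TinvAsc, TinvAsc, show (c - 1) + 1 - a = c - a from by omega,
    ← range'_split ha hc2, List.map_append, List.prod_append]

lemma Tdesc_single (h : 2 ≤ n) (a : ℕ) : Tdesc h a a = HT h a := by
  rw [Tdesc, show a + 1 - a = 1 from by omega]
  simp

lemma Tasc_single (h : 2 ≤ n) (a : ℕ) : Tasc h a a = HT h a := by
  rw [Tasc, show a + 1 - a = 1 from by omega]
  simp

lemma TinvDesc_single (h : 2 ≤ n) (a : ℕ) : TinvDesc h a a = HTinv h a := by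
  rw [TinvDesc, show a + 1 - a = 1 from by omega]
  simp

lemma TinvAsc_single (h : 2 ≤ n) (a : ℕ) : TinvAsc h a a = HTinv h a := by
  rw [TinvAsc, show a + 1 - a = 1 from by omega]
  simp

lemma conj_algebraMap {x y : Hecke n} (hxy : x * y = 1) (r : R) :
    x * algebraMap R (Hecke n) r * y = algebraMap R (Hecke n) r := by
  rw [← Algebra.commutes r x, mul_assoc, hxy, mul_one]

lemma map_HTinv_of_map_HT {k n : ℕ} (f : Hecke k →ₐ[R] Hecke n) {hk : 2 ≤ k} {hn : 2 ≤ n}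
    {i j : ℕ} (hf : f (HT hk i) = HT hn j) : f (HTinv hk i) = HTinv hn j := by
  rw [HTinv, map_add, AlgHom.commutes, hf, HTinv]

lemma map_HTinv_conj {k n : ℕ} (f : Hecke k →ₐ[R] Hecke n) {hk : 2 ≤ k} {hn : 2 ≤ n}
    {i j : ℕ} {x y : Hecke n} (hf : f (HT hk i) = x * HT hn j * y) (hxy : x * y = 1) :
    f (HTinv hk i) = x * HTinv hn j * y := by
  rw [HTinv, map_add, AlgHom.commutes, hf, HTinv, mul_add, add_mul, conj_algebraMap hxy]

lemma map_HT_prod {k n : ℕ} (f : Hecke k →ₐ[R] Hecke n) (hk : 2 ≤ k) (hn : 2 ≤ n) (s : ℕ)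
    (l : List ℕ) (hf : ∀ j ∈ l, f (HT hk j) = HT hn (s + j)) :
    f ((l.map (HT hk)).prod) = ((l.map fun j => s + j).map (HT hn)).prod := by
  rw [map_list_prod, List.map_map, List.map_map]
  congr 1
  exact List.map_congr_left fun j hj => hf j hj

lemma map_HTinv_prod {k n : ℕ} (f : Hecke k →ₐ[R] Hecke n) (hk : 2 ≤ k) (hn : 2 ≤ n) (s : ℕ)
    (l : List ℕ) (hf : ∀ j ∈ l, f (HT hk j) = HT hn (s + j)) :
    f ((l.map (HTinv hk)).prod) = ((l.map fun j => s + j).map (HTinv hn)).prod := by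
  rw [map_list_prod, List.map_map, List.map_map]
  congr 1
  exact List.map_congr_left fun j hj => map_HTinv_of_map_HT f (hf j hj)

lemma map_Tdesc {k n : ℕ} (f : Hecke k →ₐ[R] Hecke n) (hk : 2 ≤ k) (hn : 2 ≤ n) (s a b : ℕ)
    (hf : ∀ j, b ≤ j → j ≤ a → f (HT hk j) = HT hn (s + j)) :
    f (Tdesc hk a b) = Tdesc hn (s + a) (s + b) := by
  rw [Tdesc, map_HT_prod f hk hn s _ (by
    intro j hj
    simp only [List.mem_reverse, List.mem_range'_1] at hj
    exact hf j hj.1 (by omega)), Tdesc]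
  congr 2
  rw [List.map_reverse, List.map_add_range']
  congr 2
  omega

lemma map_Tasc {k n : ℕ} (f : Hecke k →ₐ[R] Hecke n) (hk : 2 ≤ k) (hn : 2 ≤ n) (s a b : ℕ)
    (hf : ∀ j, a ≤ j → j ≤ b → f (HT hk j) = HT hn (s + j)) :
    f (Tasc hk a b) = Tasc hn (s + a) (s + b) := by
  rw [Tasc, map_HT_prod f hk hn s _ (by
    intro j hj
    simp only [List.mem_range'_1] at hj
    exact hf j hj.1 (by omega)), Tasc]
  congr 2
  rw [List.map_add_range']
  congr 1
  omega

lemma map_TinvDesc {k n : ℕ} (f : Hecke k →ₐ[R] Hecke n) (hk : 2 ≤ k) (hn : 2 ≤ n) (s a b : ℕ)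
    (hf : ∀ j, b ≤ j → j ≤ a → f (HT hk j) = HT hn (s + j)) :
    f (TinvDesc hk a b) = TinvDesc hn (s + a) (s + b) := by
  rw [TinvDesc, map_HTinv_prod f hk hn s _ (by
    intro j hj
    simp only [List.mem_reverse, List.mem_range'_1] at hj
    exact hf j hj.1 (by omega)), TinvDesc]
  congr 2
  rw [List.map_reverse, List.map_add_range']
  congr 2
  omega

lemma map_TinvAsc {k n : ℕ} (f : Hecke k →ₐ[R] Hecke n) (hk : 2 ≤ k) (hn : 2 ≤ n) (s a b : ℕ)
    (hf : ∀ j, a ≤ j → j ≤ b → f (HT hk j) = HT hn (s + j)) :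
    f (TinvAsc hk a b) = TinvAsc hn (s + a) (s + b) := by
  rw [TinvAsc, map_HTinv_prod f hk hn s _ (by
    intro j hj
    simp only [List.mem_range'_1] at hj
    exact hf j hj.1 (by omega)), TinvAsc]
  congr 2
  rw [List.map_add_range']
  congr 1
  omega

lemma Hrho_mul_HrhoInv : Hrho n * HrhoInv n = 1 := by
  have h0 := RingQuot.mkAlgHom_rel R (HRel.rho_rhoInv (n := n))
  rw [map_mul, map_one] at h0
  exact h0

lemma HrhoInv_mul_Hrho : HrhoInv n * Hrho n = 1 := by
  have h0 := RingQuot.mkAlgHom_rel R (HRel.rhoInv_rho (n := n))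
  rw [map_mul, map_one] at h0
  exact h0

lemma hom_ext {k m : ℕ} {f g : Hecke k →ₐ[R] Hecke m}
    (hT : ∀ (hk : 2 ≤ k) (i : ℕ), i < k → f (HT hk i) = g (HT hk i))
    (hrho : f (Hrho k) = g (Hrho k)) : f = g := by
  have hrhoInv : f (HrhoInv k) = g (HrhoInv k) := by
    calc f (HrhoInv k) = f (HrhoInv k) * (g (Hrho k) * g (HrhoInv k)) := by
          rw [← map_mul, Hrho_mul_HrhoInv, map_one, mul_one]
      _ = (f (HrhoInv k) * f (Hrho k)) * g (HrhoInv k) := by rw [hrho, mul_assoc]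
      _ = g (HrhoInv k) := by rw [← map_mul, HrhoInv_mul_Hrho, map_one, one_mul]
  apply RingQuot.ringQuot_ext'
  apply FreeAlgebra.hom_ext
  funext x
  cases x with
  | T i hk =>
      have := hT hk i.val i.isLt
      simp only [HT, Nat.mod_eq_of_lt i.isLt] at this
      simpa using this
  | rho => simpa [Hrho] using hrho
  | rhoInv => simpa [HrhoInv] using hrhoInv

lemma map_Tdesc0 {k n : ℕ} (f : Hecke k →ₐ[R] Hecke n) (hk : 2 ≤ k) (hn : 2 ≤ n) (a b : ℕ)
    (hf : ∀ j, b ≤ j → j ≤ a → f (HT hk j) = HT hn j) :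
    f (Tdesc hk a b) = Tdesc hn a b := by
  have := map_Tdesc f hk hn 0 a b (fun j hj1 hj2 => by simpa using hf j hj1 hj2)
  simpa using this

lemma map_Tasc0 {k n : ℕ} (f : Hecke k →ₐ[R] Hecke n) (hk : 2 ≤ k) (hn : 2 ≤ n) (a b : ℕ)
    (hf : ∀ j, a ≤ j → j ≤ b → f (HT hk j) = HT hn j) :
    f (Tasc hk a b) = Tasc hn a b := by
  have := map_Tasc f hk hn 0 a b (fun j hj1 hj2 => by simpa using hf j hj1 hj2)
  simpa using this

lemma map_TinvDesc0 {k n : ℕ} (f : Hecke k →ₐ[R] Hecke n) (hk : 2 ≤ k) (hn : 2 ≤ n) (a b : ℕ)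
    (hf : ∀ j, b ≤ j → j ≤ a → f (HT hk j) = HT hn j) :
    f (TinvDesc hk a b) = TinvDesc hn a b := by
  have := map_TinvDesc f hk hn 0 a b (fun j hj1 hj2 => by simpa using hf j hj1 hj2)
  simpa using this

lemma map_TinvAsc0 {k n : ℕ} (f : Hecke k →ₐ[R] Hecke n) (hk : 2 ≤ k) (hn : 2 ≤ n) (a b : ℕ)
    (hf : ∀ j, a ≤ j → j ≤ b → f (HT hk j) = HT hn j) :
    f (TinvAsc hk a b) = TinvAsc hn a b := by
  have := map_TinvAsc f hk hn 0 a b (fun j hj1 hj2 => by simpa using hf j hj1 hj2)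
  simpa using this

lemma compL (k₁ k₂ k₃ : ℕ) (h1 : 1 ≤ k₁) (h2 : 1 ≤ k₂) (h3 : 1 ≤ k₃)
    (fL : Hecke k₁ →ₐ[R] Hecke (k₁ + k₂)) (hfL : IsPsiL (k₁ + k₂) k₁ (Nat.add_le_add h1 h2) fL)
    (ΦL : Hecke (k₁ + k₂) →ₐ[R] Hecke (k₁ + k₂ + k₃))
    (hΦL : IsPsiL (k₁ + k₂ + k₃) (k₁ + k₂) ((Nat.add_le_add h1 h2).trans (Nat.le_add_right _ _)) ΦL)
    (ΓL : Hecke k₁ →ₐ[R] Hecke (k₁ + k₂ + k₃))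
    (hΓL : IsPsiL (k₁ + k₂ + k₃) k₁ ((Nat.add_le_add h1 h2).trans (Nat.le_add_right _ _)) ΓL) :
    ΦL.comp fL = ΓL := by
  have hK : 2 ≤ k₁ + k₂ := by omega
  have hn : 2 ≤ k₁ + k₂ + k₃ := by omega
  obtain ⟨hfT, hfT0, hfρ⟩ := hfL
  obtain ⟨hΦT, hΦT0, hΦρ⟩ := hΦL
  obtain ⟨hΓT, hΓT0, hΓρ⟩ := hΓL
  apply hom_ext
  · intro hk i hik
    rw [AlgHom.comp_apply]
    rcases Nat.eq_zero_or_pos i with rfl | hipos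
    · rw [hfT0 hk, map_mul, map_mul, hΦT0 hK,
        map_TinvAsc0 ΦL hK hn _ _ (fun j hj1 hj2 => hΦT hK j (by omega) (by omega)),
        map_Tdesc0 ΦL hK hn _ _ (fun j hj1 hj2 => hΦT hK j (by omega) (by omega)),
        hΓT0 hk,
        TinvAsc_split hn (a := k₁) (b := k₁ + k₂ + k₃ - 1) (c := k₁ + k₂)
          (by omega) (by omega) (by omega),
        Tdesc_split hn (a := k₁ + k₂ + k₃ - 1) (b := k₁) (c := k₁ + k₂)
          (by omega) (by omega) (by omega)]
      simp only [mul_assoc]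
    · rw [hfT hk i hipos (by omega), hΦT hK i hipos (by omega), hΓT hk i hipos (by omega)]
  · rw [AlgHom.comp_apply, hfρ, map_mul, hΦρ,
      map_Tdesc0 ΦL hK hn _ _ (fun j hj1 hj2 => hΦT hK j (by omega) (by omega)), hΓρ,
      Tdesc_split hn (a := k₁ + k₂ + k₃ - 1) (b := k₁) (c := k₁ + k₂)
        (by omega) (by omega) (by omega)]
    simp only [mul_assoc]

lemma mul_pull {y a z : Hecke n} (h : Commute y a) : y * (a * z) = a * (y * z) := by
  rw [← mul_assoc, h.eq, mul_assoc]

lemma compR (k₁ k₂ k₃ : ℕ) (h1 : 1 ≤ k₁) (h2 : 1 ≤ k₂) (h3 : 1 ≤ k₃)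
    (gR : Hecke k₃ →ₐ[R] Hecke (k₂ + k₃)) (hgR : IsPsiR (k₂ + k₃) k₂ k₃ (Nat.add_le_add h2 h3) gR)
    (ΦR : Hecke k₃ →ₐ[R] Hecke (k₁ + k₂ + k₃))
    (hΦR : IsPsiR (k₁ + k₂ + k₃) (k₁ + k₂) k₃ ((Nat.add_le_add h1 h2).trans (Nat.le_add_right _ _)) ΦR)
    (ΓR : Hecke (k₂ + k₃) →ₐ[R] Hecke (k₁ + k₂ + k₃))
    (hΓR : IsPsiR (k₁ + k₂ + k₃) k₁ (k₂ + k₃) ((Nat.add_le_add h1 h2).trans (Nat.le_add_right _ _)) ΓR) :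
    ΦR = ΓR.comp gR := by
  have hM : 2 ≤ k₂ + k₃ := by omega
  have hn : 2 ≤ k₁ + k₂ + k₃ := by omega
  have hlt : 2 < k₁ + k₂ + k₃ := by omega
  obtain ⟨hgT, hgT0, hgρ⟩ := hgR
  obtain ⟨hΦT, hΦT0, hΦρ⟩ := hΦR
  obtain ⟨hΓT, hΓT0, hΓρ⟩ := hΓR
  apply hom_ext
  · intro hk j hjk
    rcases Nat.eq_zero_or_pos j with rfl | hjpos
    · -- T_0 case, 2 ≤ k₃
      have hsingle : ∀ j : ℕ, k₁ + 1 ≤ j → j ≤ k₁ + k₂ →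
          Commute (TinvDesc hn (k₁ - 1) 0) (HT hn j) := by
        intro j hj1 hj2
        exact (commute_TinvDesc hn (fun i hi1 hi2 =>
          (commute_HT hlt (by omega) (by omega) (by omega) (by omega)).symm)).symm
      have c1 : Commute (TinvDesc hn (k₁ - 1) 0) (Tasc hn (k₁ + 1) (k₁ + k₂ - 1)) :=
        commute_Tasc hn (fun j hj1 hj2 => hsingle j hj1 (by omega))
      have c2 : Commute (TinvDesc hn (k₁ - 1) 0) (HT hn (k₁ + k₂)) :=
        hsingle (k₁ + k₂) (by omega) (by omega)
      have c3 : Commute (TinvDesc hn (k₁ - 1) 0) (TinvDesc hn (k₁ + k₂ - 1) (k₁ + 1)) :=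
        commute_TinvDesc hn (fun j hj1 hj2 => hsingle j hj1 (by omega))
      rw [AlgHom.comp_apply, hgT0 hk,
        Tasc_split hM (a := 0) (b := k₂ - 1) (c := 1) (by omega) (by omega) (by omega),
        Nat.sub_self, Tasc_single,
        TinvDesc_split hM (a := k₂ - 1) (b := 0) (c := 1) (by omega) (by omega) (by omega),
        Nat.sub_self, TinvDesc_single]
      simp only [map_mul]
      rw [hΓT0 hM,
        map_Tasc ΓR hM hn k₁ 1 (k₂ - 1) (fun j hj1 hj2 => hΓT hM j (by omega) (by omega)),
        hΓT hM k₂ (by omega) (by omega),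
        map_TinvDesc ΓR hM hn k₁ (k₂ - 1) 1 (fun j hj1 hj2 => hΓT hM j (by omega) (by omega)),
        map_HTinv_conj ΓR (hΓT0 hM) (Tasc_mul_TinvDesc hn 0 (k₁ - 1)),
        show k₁ + (k₂ - 1) = k₁ + k₂ - 1 from by omega,
        hΦT0 hk,
        Tasc_split hn (a := 0) (b := k₁ + k₂ - 1) (c := k₁) (by omega) (by omega) (by omega),
        Tasc_split hn (a := k₁) (b := k₁ + k₂ - 1) (c := k₁ + 1) (by omega) (by omega)
          (by omega),
        Nat.add_sub_cancel, Tasc_single,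
        TinvDesc_split hn (a := k₁ + k₂ - 1) (b := 0) (c := k₁ + 1) (by omega) (by omega)
          (by omega),
        Nat.add_sub_cancel,
        TinvDesc_split hn (a := k₁) (b := 0) (c := k₁) (by omega) (by omega) (by omega),
        TinvDesc_single]
      simp only [mul_assoc]
      congr 1
      congr 1
      rw [mul_pull c1, mul_pull c2, mul_pull c3,
        ← mul_assoc (TinvDesc hn (k₁ - 1) 0) (Tasc hn 0 (k₁ - 1)),
        TinvDesc_mul_Tasc hn 0 (k₁ - 1), one_mul]
    · rw [hΦT hk j hjpos (by omega), AlgHom.comp_apply, hgT hk j hjpos (by omega),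
        hΓT hM (k₂ + j) (by omega) (by omega),
        show k₁ + (k₂ + j) = k₁ + k₂ + j from by omega]
  · rw [hΦρ, AlgHom.comp_apply, hgρ, map_mul,
      map_TinvDesc ΓR hM hn k₁ k₂ 1 (fun j hj1 hj2 => hΓT hM j (by omega) (by omega)),
      hΓρ,
      TinvDesc_split hn (a := k₁ + k₂) (b := 1) (c := k₁ + 1) (by omega) (by omega) (by omega),
      Nat.add_sub_cancel]
    simp only [mul_assoc]

lemma compM (k₁ k₂ k₃ : ℕ) (h1 : 1 ≤ k₁) (h2 : 1 ≤ k₂) (h3 : 1 ≤ k₃)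
    (fR : Hecke k₂ →ₐ[R] Hecke (k₁ + k₂)) (hfR : IsPsiR (k₁ + k₂) k₁ k₂ (Nat.add_le_add h1 h2) fR)
    (gL : Hecke k₂ →ₐ[R] Hecke (k₂ + k₃)) (hgL : IsPsiL (k₂ + k₃) k₂ (Nat.add_le_add h2 h3) gL)
    (ΦL : Hecke (k₁ + k₂) →ₐ[R] Hecke (k₁ + k₂ + k₃))
    (hΦL : IsPsiL (k₁ + k₂ + k₃) (k₁ + k₂) ((Nat.add_le_add h1 h2).trans (Nat.le_add_right _ _)) ΦL)
    (ΓR : Hecke (k₂ + k₃) →ₐ[R] Hecke (k₁ + k₂ + k₃))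
    (hΓR : IsPsiR (k₁ + k₂ + k₃) k₁ (k₂ + k₃) ((Nat.add_le_add h1 h2).trans (Nat.le_add_right _ _)) ΓR) :
    ΦL.comp fR = ΓR.comp gL := by
  have hK : 2 ≤ k₁ + k₂ := by omega
  have hM : 2 ≤ k₂ + k₃ := by omega
  have hn : 2 ≤ k₁ + k₂ + k₃ := by omega
  have hlt : 2 < k₁ + k₂ + k₃ := by omega
  obtain ⟨hfT, hfT0, hfρ⟩ := hfR
  obtain ⟨hgT, hgT0, hgρ⟩ := hgL
  obtain ⟨hΦT, hΦT0, hΦρ⟩ := hΦL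
  obtain ⟨hΓT, hΓT0, hΓρ⟩ := hΓR
  apply hom_ext
  · intro hk j hjk
    rcases Nat.eq_zero_or_pos j with rfl | hjpos
    · -- T_0 case, 2 ≤ k₂
      have hsingle : ∀ j : ℕ, 1 ≤ j → j ≤ k₁ →
          Commute (Tdesc hn (k₁ + k₂ + k₃ - 1) (k₁ + k₂)) (HT hn j) := by
        intro j hj1 hj2
        exact (commute_Tdesc hn (fun i hi1 hi2 =>
          commute_HT hlt (by omega) (by omega) (by omega) (by omega))).symm
      have d1 : Commute (Tdesc hn (k₁ + k₂ + k₃ - 1) (k₁ + k₂)) (Tasc hn 1 (k₁ - 1)) :=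
        commute_Tasc hn (fun j hj1 hj2 => hsingle j hj1 (by omega))
      have d2 : Commute (Tdesc hn (k₁ + k₂ + k₃ - 1) (k₁ + k₂)) (HT hn k₁) :=
        hsingle k₁ (by omega) (by omega)
      have d3 : Commute (Tdesc hn (k₁ + k₂ + k₃ - 1) (k₁ + k₂)) (TinvDesc hn (k₁ - 1) 1) :=
        commute_TinvDesc hn (fun j hj1 hj2 => hsingle j hj1 (by omega))
      rw [AlgHom.comp_apply, AlgHom.comp_apply, hfT0 hk,
        Tasc_split hK (a := 0) (b := k₁ - 1) (c := 1) (by omega) (by omega) (by omega),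
        Nat.sub_self, Tasc_single,
        TinvDesc_split hK (a := k₁ - 1) (b := 0) (c := 1) (by omega) (by omega) (by omega),
        Nat.sub_self, TinvDesc_single]
      simp only [map_mul]
      rw [hΦT0 hK,
        map_Tasc0 ΦL hK hn 1 (k₁ - 1) (fun j hj1 hj2 => hΦT hK j (by omega) (by omega)),
        hΦT hK k₁ (by omega) (by omega),
        map_TinvDesc0 ΦL hK hn (k₁ - 1) 1 (fun j hj1 hj2 => hΦT hK j (by omega) (by omega)),
        map_HTinv_conj ΦL (hΦT0 hK)
          (TinvAsc_mul_Tdesc hn (k₁ + k₂ + k₃ - 1) (k₁ + k₂)),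
        hgT0 hk]
      simp only [map_mul]
      rw [hΓT0 hM,
        map_TinvAsc ΓR hM hn k₁ k₂ (k₂ + k₃ - 1)
          (fun j hj1 hj2 => hΓT hM j (by omega) (by omega)),
        map_Tdesc ΓR hM hn k₁ (k₂ + k₃ - 1) k₂
          (fun j hj1 hj2 => hΓT hM j (by omega) (by omega)),
        show k₁ + (k₂ + k₃ - 1) = k₁ + k₂ + k₃ - 1 from by omega,
        Tasc_split hn (a := 0) (b := k₁ - 1) (c := 1) (by omega) (by omega) (by omega),
        Nat.sub_self, Tasc_single,
        TinvDesc_split hn (a := k₁ - 1) (b := 0) (c := 1) (by omega) (by omega) (by omega),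
        Nat.sub_self, TinvDesc_single]
      simp only [mul_assoc]
      congr 1
      congr 1
      rw [mul_pull d1, mul_pull d2, mul_pull d3,
        ← mul_assoc (Tdesc hn (k₁ + k₂ + k₃ - 1) (k₁ + k₂))
          (TinvAsc hn (k₁ + k₂) (k₁ + k₂ + k₃ - 1)),
        Tdesc_mul_TinvAsc hn (k₁ + k₂ + k₃ - 1) (k₁ + k₂), one_mul]
    · rw [AlgHom.comp_apply, AlgHom.comp_apply, hfT hk j hjpos (by omega),
        hΦT hK (k₁ + j) (by omega) (by omega), hgT hk j hjpos (by omega),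
        hΓT hM j hjpos (by omega)]
  · rw [AlgHom.comp_apply, AlgHom.comp_apply, hfρ, map_mul,
      map_TinvDesc0 ΦL hK hn k₁ 1 (fun j hj1 hj2 => hΦT hK j (by omega) (by omega)),
      hΦρ, hgρ, map_mul, hΓρ,
      map_Tdesc ΓR hM hn k₁ (k₂ + k₃ - 1) k₂
        (fun j hj1 hj2 => hΓT hM j (by omega) (by omega)),
      show k₁ + (k₂ + k₃ - 1) = k₁ + k₂ + k₃ - 1 from by omega]
    simp only [mul_assoc]


/-- **Statement 11.**  Associativity of the Zelevinsky embeddings: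
`ψ_{k₁+k₂,k₃} ∘ (ψ_{k₁,k₂} ⊗ id) = ψ_{k₁,k₂+k₃} ∘ (id ⊗ ψ_{k₂,k₃})`, stated at the level
of elements, where each `ψ_{k,m}` is determined by its pair of parabolic embeddings
`ψ_L`, `ψ_R` via `a ⊗ b ↦ ψ_L(a)·ψ_R(b)`. -/
theorem statement_11 (k₁ k₂ k₃ : ℕ) (h1 : 1 ≤ k₁) (h2 : 1 ≤ k₂) (h3 : 1 ≤ k₃)
    (hn : 3 ≤ k₁ + k₂ + k₃)
    (fL : Hecke k₁ →ₐ[R] Hecke (k₁ + k₂)) (hfL : IsPsiL (k₁ + k₂) k₁ (by omega) fL)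
    (fR : Hecke k₂ →ₐ[R] Hecke (k₁ + k₂)) (hfR : IsPsiR (k₁ + k₂) k₁ k₂ (by omega) fR)
    (gL : Hecke k₂ →ₐ[R] Hecke (k₂ + k₃)) (hgL : IsPsiL (k₂ + k₃) k₂ (by omega) gL)
    (gR : Hecke k₃ →ₐ[R] Hecke (k₂ + k₃)) (hgR : IsPsiR (k₂ + k₃) k₂ k₃ (by omega) gR)
    (ΦL : Hecke (k₁ + k₂) →ₐ[R] Hecke (k₁ + k₂ + k₃))
    (hΦL : IsPsiL (k₁ + k₂ + k₃) (k₁ + k₂) (by omega) ΦL)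
    (ΦR : Hecke k₃ →ₐ[R] Hecke (k₁ + k₂ + k₃))
    (hΦR : IsPsiR (k₁ + k₂ + k₃) (k₁ + k₂) k₃ (by omega) ΦR)
    (ΓL : Hecke k₁ →ₐ[R] Hecke (k₁ + k₂ + k₃))
    (hΓL : IsPsiL (k₁ + k₂ + k₃) k₁ (by omega) ΓL)
    (ΓR : Hecke (k₂ + k₃) →ₐ[R] Hecke (k₁ + k₂ + k₃))
    (hΓR : IsPsiR (k₁ + k₂ + k₃) k₁ (k₂ + k₃) (by omega) ΓR) :
    ∀ (a : Hecke k₁) (b : Hecke k₂) (c : Hecke k₃),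
      ΦL (fL a * fR b) * ΦR c = ΓL a * ΓR (gL b * gR c) := by
  intro a b c
  have hA := compL k₁ k₂ k₃ h1 h2 h3 fL hfL ΦL hΦL ΓL hΓL
  have hB := compM k₁ k₂ k₃ h1 h2 h3 fR hfR gL hgL ΦL hΦL ΓR hΓR
  have hC := compR k₁ k₂ k₃ h1 h2 h3 gR hgR ΦR hΦR ΓR hΓR
  calc ΦL (fL a * fR b) * ΦR c
      = (ΦL.comp fL) a * ((ΦL.comp fR) b * ΦR c) := by
        rw [map_mul, AlgHom.comp_apply, AlgHom.comp_apply, mul_assoc]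
    _ = ΓL a * ((ΓR.comp gL) b * (ΓR.comp gR) c) := by rw [hA, hB, hC]
    _ = ΓL a * ΓR (gL b * gR c) := by
        rw [AlgHom.comp_apply, AlgHom.comp_apply, ← map_mul]

end ParabolicInduction
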